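/- arXiv:1909.03152 — 5 statements merged into one kernel-verified Lean document; each statement's English description precedes it below -/
import Mathlib

section
/- Every n-vertex graph with girth greater than k has at most O(n^{1 + 1/⌊k/2⌋}) edges; more precisely, there is a constant C such that any n-vertex graph with girth > k has at most C·n^{1+1/⌊k/2⌋} edges. -/
open scoped ENNReal Classical

open Finset SimpleGraph

section Aux

variable {V : Type} [Fintype V] [DecidableEq V]

lemma lemA (G : SimpleGraph V) [DecidableRel G.Adj] (c : ℝ) :
    ∀ (n : ℕ) (S : Finset V), S.card = n →
    2*c*S.card < (∑ x ∈ S, ((S.filter (G.Adj x)).card : ℝ)) →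
    ∃ T : Finset V, T.Nonempty ∧ ∀ x ∈ T, c < ((T.filter (G.Adj x)).card : ℝ) := by
  intro n
  induction n using Nat.strong_induction_on with
  | _ n ih =>
    intro S hcard hS
    rcases S.eq_empty_or_nonempty with rfl | hne
    · simp at hS
    by_cases hall : ∀ x ∈ S, c < ((S.filter (G.Adj x)).card : ℝ)
    · exact ⟨S, hne, hall⟩
    push_neg at hall
    obtain ⟨v, hvS, hvd⟩ := hall
    have key : ∀ x ∈ S.erase v,
        ((S.filter (G.Adj x)).card : ℝ) ≤ (((S.erase v).filter (G.Adj x)).card : ℝ)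
          + (if G.Adj x v then 1 else 0) := by
      intro x _
      rw [Finset.filter_erase]
      by_cases hxv : G.Adj x v
      · have hv' : v ∈ S.filter (G.Adj x) := Finset.mem_filter.mpr ⟨hvS, hxv⟩
        rw [Finset.card_erase_of_mem hv', if_pos hxv]
        have h1 : 1 ≤ (S.filter (G.Adj x)).card := Finset.card_pos.mpr ⟨v, hv'⟩
        rw [Nat.cast_sub h1]
        simp
      · rw [Finset.erase_eq_of_notMem (by simp [hxv]), if_neg hxv]
        simp
    have h2 : ∑ x ∈ S.erase v, ((S.filter (G.Adj x)).card : ℝ)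
        ≤ (∑ x ∈ S.erase v, (((S.erase v).filter (G.Adj x)).card : ℝ))
          + ∑ x ∈ S.erase v, (if G.Adj x v then (1:ℝ) else 0) := by
      rw [← Finset.sum_add_distrib]
      exact Finset.sum_le_sum key
    have h3 : (∑ x ∈ S.erase v, (if G.Adj x v then (1:ℝ) else 0))
        ≤ ((S.filter (G.Adj v)).card : ℝ) := by
      rw [Finset.sum_boole]
      have : (S.erase v).filter (fun x => G.Adj x v) ⊆ S.filter (G.Adj v) := by
        intro x hx
        simp only [Finset.mem_filter, Finset.mem_erase] at hx ⊢
        exact ⟨hx.1.2, hx.2.symm⟩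
      exact_mod_cast Nat.cast_le.mpr (Finset.card_le_card this)
    have hsplit : (∑ x ∈ S, ((S.filter (G.Adj x)).card : ℝ))
        = ((S.filter (G.Adj v)).card : ℝ) + ∑ x ∈ S.erase v, ((S.filter (G.Adj x)).card : ℝ) :=
      (Finset.add_sum_erase _ _ hvS).symm
    have hS' : 2*c*((S.erase v).card : ℝ)
        < ∑ x ∈ S.erase v, (((S.erase v).filter (G.Adj x)).card : ℝ) := by
      have hc1 : ((S.erase v).card : ℝ) = (S.card : ℝ) - 1 := by
        rw [Finset.card_erase_of_mem hvS, Nat.cast_sub (Finset.card_pos.mpr ⟨v, hvS⟩)]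
        simp
      rw [hc1]
      nlinarith [hS, h2, h3, hsplit, hvd]
    have hlt : (S.erase v).card < n := by
      rw [← hcard]
      exact Finset.card_erase_lt_of_mem hvS
    exact ih _ hlt _ rfl hS'

lemma lemC {G : SimpleGraph V} :
    ∀ (n : ℕ) (u v : V) (p q : G.Walk u v), p.IsPath → q.IsPath → p ≠ q →
      p.length + q.length ≤ n →
    ∃ (w : V) (cyc : G.Walk w w), cyc.IsCycle ∧ cyc.length ≤ p.length + q.length := by
  intro n
  induction n with
  | zero =>
    intro u v p q hp hq hne hlen
    have hp0 : p.length = 0 := by omega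
    have := p.eq_of_length_eq_zero hp0
    subst this
    rw [SimpleGraph.Walk.length_eq_zero_iff] at hp0
    have hq0 : q.length = 0 := by omega
    rw [SimpleGraph.Walk.length_eq_zero_iff] at hq0
    exact absurd ((SimpleGraph.Walk.nil_iff_eq_nil.mp hp0).trans (SimpleGraph.Walk.nil_iff_eq_nil.mp hq0).symm) hne
  | succ n ihn =>
    intro u v p q hp hq hne hlen
    cases p with
    | nil =>
      rw [SimpleGraph.Walk.isPath_iff_eq_nil] at hq
      exact absurd hq.symm hne
    | @cons _ x _ h p' =>
      cases q with
      | nil =>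
        rw [SimpleGraph.Walk.isPath_iff_eq_nil] at hp
        simp at hp
      | @cons _ y _ h2 q' =>
        rw [SimpleGraph.Walk.cons_isPath_iff] at hp hq
        by_cases hxy : x = y
        · subst hxy
          have hne' : p' ≠ q' := by
            rintro rfl; exact hne rfl
          obtain ⟨w, cyc, hcyc, hle⟩ :=
            ihn _ _ p' q' hp.1 hq.1 hne' (by simp at hlen; omega)
          exact ⟨w, cyc, hcyc, by simp; omega⟩
        · -- build a cycle through u
          set P := (p'.append q'.reverse).bypass with hP
          have hPpath : P.IsPath := SimpleGraph.Walk.bypass_isPath _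
          have hPlen : P.length ≤ p'.length + q'.length := by
            calc P.length ≤ (p'.append q'.reverse).length :=
                  SimpleGraph.Walk.length_bypass_le _
            _ = p'.length + q'.length := by simp
          have huP : u ∉ P.support := by
            intro hu
            have := SimpleGraph.Walk.support_bypass_subset _ hu
            rw [SimpleGraph.Walk.mem_support_append_iff] at this
            rcases this with h' | h'
            · exact hp.2 h'
            · rw [SimpleGraph.Walk.support_reverse, List.mem_reverse] at h'
              exact hq.2 h'
          have hyu : G.Adj y u := h2.symm
          refine ⟨u, SimpleGraph.Walk.cons h (P.concat hyu), ?_, ?_⟩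
          · rw [SimpleGraph.Walk.cons_isCycle_iff]
            constructor
            · -- (P.concat hyu).IsPath
              rw [SimpleGraph.Walk.isPath_def, SimpleGraph.Walk.support_concat]
              rw [List.nodup_append]
              refine ⟨hPpath.support_nodup, List.nodup_singleton u, ?_⟩
              intro a ha b hb
              rw [List.mem_singleton] at hb
              subst hb
              rintro rfl; exact huP ha
            · -- s(u,x) ∉ edges
              rw [SimpleGraph.Walk.edges_concat]
              intro hmem
              rw [List.concat_eq_append, List.mem_append] at hmem
              rcases hmem with h' | h'
              · exact huP (SimpleGraph.Walk.fst_mem_support_of_mem_edges _ h')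
              · rw [List.mem_singleton, Sym2.eq_iff] at h'
                rcases h' with ⟨h1', h2'⟩ | ⟨h1', h2'⟩
                · exact h.ne h2'.symm
                · exact hxy h2'
          · simp [SimpleGraph.Walk.length_concat]
            omega

lemma lemD {G : SimpleGraph V} {x w v : V} (q : G.Walk x v) (hq : q.IsPath) (h : G.Adj w x)
    (hw : w ∈ q.support)
    (hg : ∀ (a : V) (cyc : G.Walk a a), cyc.IsCycle → q.length + 2 ≤ cyc.length) :
    w = q.getVert 1 := by
  have htp : (q.takeUntil w hw).IsPath := hq.takeUntil hw
  have htlen : (q.takeUntil w hw).length ≤ q.length := q.length_takeUntil_le hw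
  have hne0 : (q.takeUntil w hw).length ≠ 0 := by
    intro h0
    exact h.ne' ((q.takeUntil w hw).eq_of_length_eq_zero h0)
  by_cases hL : (q.takeUntil w hw).length = 1
  · -- w is the second vertex
    have hspec := q.take_spec hw
    have := SimpleGraph.Walk.getVert_append (q.takeUntil w hw) (q.dropUntil w hw) 1
    rw [hspec] at this
    rw [this, hL]
    simp
  · -- build a short cycle, contradiction
    exfalso
    have hL2 : 2 ≤ (q.takeUntil w hw).length := by omega
    have hcyc : (SimpleGraph.Walk.cons h (q.takeUntil w hw)).IsCycle := by
      rw [SimpleGraph.Walk.cons_isCycle_iff]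
      refine ⟨htp, ?_⟩
      intro hmem
      set t := q.takeUntil w hw with ht
      clear_value t
      cases t with
      | nil => simp at hne0
      | @cons _ z _ h0 t0 =>
        rw [SimpleGraph.Walk.edges_cons, List.mem_cons] at hmem
        rw [SimpleGraph.Walk.cons_isPath_iff] at htp
        rcases hmem with h' | h'
        · rw [Sym2.eq_iff] at h'
          rcases h' with ⟨h1', h2'⟩ | ⟨h1', h2'⟩
          · exact h.ne h1'
          · -- w = z, so t0 : Walk w w is a path hence nil, length 1, contra
            subst h1'
            have : t0 = SimpleGraph.Walk.nil :=
              SimpleGraph.Walk.isPath_iff_eq_nil.mp htp.1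
            subst this
            simp at hL2
        · exact htp.2 (SimpleGraph.Walk.snd_mem_support_of_mem_edges _ h')
    have := hg _ _ hcyc
    rw [SimpleGraph.Walk.length_cons] at this
    omega

def tailP {G : SimpleGraph V} {v : V} : (Σ w : V, G.Walk w v) → (Σ w : V, G.Walk w v)
  | ⟨_, SimpleGraph.Walk.nil⟩ => ⟨v, SimpleGraph.Walk.nil⟩
  | ⟨_, SimpleGraph.Walk.cons _ q⟩ => ⟨_, q⟩

lemma path_count (G : SimpleGraph V) [DecidableRel G.Adj]
    (S : Finset V) (m r : ℕ) (hr : 1 ≤ r)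
    (hS : ∀ x ∈ S, m + 1 ≤ (S.filter (G.Adj x)).card)
    (hg : ∀ (a : V) (cyc : G.Walk a a), cyc.IsCycle → 2*r + 1 ≤ cyc.length)
    (v : V) (hv : v ∈ S) :
    m ^ r + 1 ≤ Fintype.card V := by
  classical
  set P : ℕ → Finset (Σ w : V, G.Walk w v) := fun i =>
    (Finset.univ.sigma fun w => G.finsetWalkLength i w v).filter
      (fun pr => pr.2.IsPath ∧ ∀ x ∈ pr.2.support, x ∈ S) with hPdef
  have hmem : ∀ (i : ℕ) (pr : Σ w : V, G.Walk w v),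
      pr ∈ P i ↔ pr.2.length = i ∧ pr.2.IsPath ∧ ∀ x ∈ pr.2.support, x ∈ S := by
    intro i pr
    rw [hPdef]
    simp only [Finset.mem_filter, Finset.mem_sigma, Finset.mem_univ, true_and,
      SimpleGraph.mem_finsetWalkLength_iff]
    try tauto
  -- step
  have hstep : ∀ i : ℕ, i + 1 ≤ r → m * (P i).card ≤ (P (i+1)).card := by
    intro i hi
    have hfiber : ∀ pr ∈ P i, m ≤ ((P (i+1)).filter (fun p => tailP p = pr)).card := by
      rintro ⟨x, q'⟩ hq
      rw [hmem] at hq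
      obtain ⟨hlen, hpath, hsupp⟩ := hq
      dsimp only at hlen hpath hsupp
      have hxS : x ∈ S := hsupp _ (q'.start_mem_support)
      set Ext : Finset V := S.filter (fun w => G.Adj w x ∧ w ∉ q'.support) with hExt
      have hm : m ≤ Ext.card := by
        have hsub : S.filter (fun w => G.Adj w x) ⊆ Ext ∪ {q'.getVert 1} := by
          intro w hw
          rw [Finset.mem_filter] at hw
          by_cases hmem' : w ∈ q'.support
          · have : w = q'.getVert 1 := by
              refine lemD q' hpath hw.2 hmem' ?_
              intro a cyc hcyc
              have := hg a cyc hcyc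
              omega
            simp [this]
          · exact Finset.mem_union_left _ (by rw [hExt, Finset.mem_filter]; exact ⟨hw.1, hw.2, hmem'⟩)
        have h1 : (S.filter (fun w => G.Adj w x)).card ≤ Ext.card + 1 := by
          calc (S.filter (fun w => G.Adj w x)).card ≤ (Ext ∪ {q'.getVert 1}).card :=
              Finset.card_le_card hsub
          _ ≤ Ext.card + 1 := by
              refine le_trans (Finset.card_union_le _ _) ?_
              simp
        have h2 : (S.filter (G.Adj x)).card = (S.filter (fun w => G.Adj w x)).card := by
          congr 1
          apply Finset.filter_congr
          intro w _
          simp [G.adj_comm]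
        have := hS x hxS
        omega
      -- inject Ext into the fiber
      refine le_trans hm ?_
      set f : V → (Σ w : V, G.Walk w v) := fun w =>
        if h : G.Adj w x ∧ w ∉ q'.support then ⟨w, SimpleGraph.Walk.cons h.1 q'⟩
        else ⟨v, SimpleGraph.Walk.nil⟩ with hf
      refine Finset.card_le_card_of_injOn f ?_ ?_
      · intro w hw
        rw [hExt, Finset.mem_coe, Finset.mem_filter] at hw
        obtain ⟨hwS, hadj, hns⟩ := hw
        rw [Finset.mem_coe, Finset.mem_filter]
        have hfw : f w = ⟨w, SimpleGraph.Walk.cons hadj q'⟩ := by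
          rw [hf]; simp [hadj, hns]
        constructor
        · rw [hfw, hmem]
          refine ⟨by simp [hlen], ?_, ?_⟩
          · rw [SimpleGraph.Walk.cons_isPath_iff]
            exact ⟨hpath, hns⟩
          · intro y hy
            rw [SimpleGraph.Walk.support_cons, List.mem_cons] at hy
            rcases hy with rfl | hy
            · exact hwS
            · exact hsupp _ hy
        · rw [hfw]; rfl
      · intro w hw w' hw' heq
        simp only [hExt, Finset.coe_filter, Set.mem_setOf_eq] at hw hw'
        have h1 : (f w).1 = w := by
          rw [hf]
          simp only [dif_pos (show G.Adj w x ∧ w ∉ q'.support from ⟨hw.2.1, hw.2.2⟩)]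
        have h2 : (f w').1 = w' := by
          rw [hf]
          simp only [dif_pos (show G.Adj w' x ∧ w' ∉ q'.support from ⟨hw'.2.1, hw'.2.2⟩)]
        rw [← h1, ← h2, heq]
    have hdisj : ∀ pr1 ∈ P i, ∀ pr2 ∈ P i, pr1 ≠ pr2 →
        Disjoint ((P (i+1)).filter (fun p => tailP p = pr1))
          ((P (i+1)).filter (fun p => tailP p = pr2)) := by
      intro pr1 _ pr2 _ hne
      refine Finset.disjoint_left.mpr ?_
      intro p hp1 hp2
      rw [Finset.mem_filter] at hp1 hp2
      exact hne (hp1.2.symm.trans hp2.2)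
    calc m * (P i).card = ∑ _pr ∈ P i, m := by
          rw [Finset.sum_const, smul_eq_mul, mul_comm]
    _ ≤ ∑ pr ∈ P i, ((P (i+1)).filter (fun p => tailP p = pr)).card :=
          Finset.sum_le_sum hfiber
    _ = ((P i).biUnion (fun pr => (P (i+1)).filter (fun p => tailP p = pr))).card :=
          (Finset.card_biUnion hdisj).symm
    _ ≤ (P (i+1)).card :=
          Finset.card_le_card (Finset.biUnion_subset.mpr fun pr _ => Finset.filter_subset _ _)
  -- base
  have hbase : 1 ≤ (P 0).card := by
    refine Finset.card_pos.mpr ⟨⟨v, SimpleGraph.Walk.nil⟩, ?_⟩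
    rw [hmem]
    refine ⟨rfl, SimpleGraph.Walk.IsPath.nil, ?_⟩
    intro x hx
    simp only [SimpleGraph.Walk.support_nil, List.mem_singleton] at hx
    subst hx
    exact hv
  -- growth
  have hgrow : ∀ j, j ≤ r → m ^ j ≤ (P j).card := by
    intro j
    induction j with
    | zero => intro _; simpa using hbase
    | succ j ihj =>
      intro hj
      calc m ^ (j+1) = m * m ^ j := by ring
      _ ≤ m * (P j).card := Nat.mul_le_mul_left _ (ihj (by omega))
      _ ≤ (P (j+1)).card := hstep j hj
  -- endpoints injective
  have hinj : (P r).card ≤ (Finset.univ.erase v).card := by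
    refine Finset.card_le_card_of_injOn Sigma.fst ?_ ?_
    · rintro ⟨w, p⟩ hp
      rw [Finset.mem_coe, hmem] at hp
      refine Finset.mem_erase.mpr ⟨?_, Finset.mem_univ _⟩
      dsimp only
      rintro rfl
      have hnil := SimpleGraph.Walk.isPath_iff_eq_nil.mp hp.2.1
      rw [hnil] at hp
      have : (0 : ℕ) = r := hp.1
      omega
    · rintro ⟨w, p⟩ hp ⟨w', p'⟩ hp' heq
      simp only [Finset.mem_coe] at hp hp'
      dsimp only at heq
      subst heq
      rw [hmem] at hp hp'
      dsimp only at hp hp'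
      by_cases hpq : p = p'
      · rw [hpq]
      · exfalso
        obtain ⟨a, cyc, hcyc, hlc⟩ :=
          lemC (p.length + p'.length) _ _ p p' hp.2.1 hp'.2.1 hpq le_rfl
        have := hg a cyc hcyc
        have e1 := hp.1
        have e2 := hp'.1
        omega
  have h5 : (Finset.univ.erase v).card = Fintype.card V - 1 := by
    rw [Finset.card_erase_of_mem (Finset.mem_univ v), Finset.card_univ]
  have hcardV : 1 ≤ Fintype.card V := Fintype.card_pos_iff.mpr ⟨v⟩
  have h6 := hgrow r le_rfl
  omega

end Aux

/-- The Moore bound: there is a constant `C` (depending on `k`) such that every `n`-vertex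
graph of girth greater than `k` has at most `C · n^{1 + 1/⌊k/2⌋}` edges. -/
theorem moore_bound (k : ℕ) (hk : 2 ≤ k) :
    ∃ C : ℝ, ∀ (n : ℕ) (V : Type) (_ : Fintype V) (G : SimpleGraph V),
      Fintype.card V = n → (k : ℕ∞) < G.egirth →
      (G.edgeSet.ncard : ℝ) ≤ C * (n : ℝ) ^ (1 + 1 / (k / 2 : ℕ) : ℝ) := by
  refine ⟨2, ?_⟩
  intro n V instV G hcard hgirth
  letI := Classical.decEq V
  letI : DecidableRel G.Adj := Classical.decRel _
  set r : ℕ := k / 2 with hrdef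
  have hr1 : 1 ≤ r := by omega
  have h2rk : 2 * r ≤ k := by omega
  rcases Nat.eq_zero_or_pos n with rfl | hn
  · have hV : IsEmpty V := Fintype.card_eq_zero_iff.mp hcard
    have hE : G.edgeSet = ∅ := by
      ext e
      refine e.ind ?_
      intro a b
      exact (hV.false a).elim
    rw [hE, Set.ncard_empty]
    push_cast
    positivity
  · by_contra hcon
    push_neg at hcon
    have hnR : (0:ℝ) < (n:ℝ) := by exact_mod_cast hn
    set x : ℝ := (n : ℝ) ^ ((1:ℝ)/(r:ℝ)) with hx
    have hx1 : 1 ≤ x := Real.one_le_rpow (by exact_mod_cast hn) (by positivity)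
    have hedge : ((G.edgeSet.ncard : ℕ):ℝ) = (G.edgeFinset.card : ℝ) := by
      congr 1
      rw [Set.ncard_eq_toFinset_card']
      exact congrArg Finset.card (by ext e; simp)
    have hsum : (∑ y ∈ (Finset.univ : Finset V),
        (((Finset.univ : Finset V).filter (G.Adj y)).card : ℝ)) = 2 * (G.edgeSet.ncard : ℝ) := by
      have h1 : ∀ y : V, ((Finset.univ : Finset V).filter (G.Adj y)) = G.neighborFinset y := by
        intro y
        rw [neighborFinset_eq_filter]
      have h2 : (∑ y ∈ (Finset.univ : Finset V), (((Finset.univ : Finset V).filter (G.Adj y)).card : ℝ))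
          = ((∑ y : V, G.degree y : ℕ) : ℝ) := by
        push_cast
        apply Finset.sum_congr rfl
        intro y _
        rw [h1 y]
        rfl
      rw [h2, G.sum_degrees_eq_twice_card_edges, hedge]
      push_cast
      ring
    have hrpow : (n:ℝ) ^ ((1:ℝ) + 1/(r:ℝ)) = (n:ℝ) * x := by
      rw [hx, Real.rpow_add hnR, Real.rpow_one]
    have hstart : 2*(2*x)*(((Finset.univ : Finset V).card : ℕ):ℝ)
        < ∑ y ∈ (Finset.univ : Finset V), (((Finset.univ : Finset V).filter (G.Adj y)).card : ℝ) := by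
      rw [hsum, Finset.card_univ, hcard]
      have hA : (0:ℝ) ≤ (n:ℝ) ^ ((1:ℝ) + 1/(r:ℝ)) := Real.rpow_nonneg (le_of_lt hnR) _
      nlinarith [hcon, hrpow, hA]
    obtain ⟨T, hTne, hTdeg⟩ := lemA G (2*x) _ Finset.univ rfl hstart
    set m : ℕ := ⌊2*x⌋₊ with hm
    have hSdeg : ∀ y ∈ T, m + 1 ≤ (T.filter (G.Adj y)).card := by
      intro y hy
      have h1 : (m:ℝ) ≤ 2*x := Nat.floor_le (by positivity)
      have h2 : (m:ℝ) < ((T.filter (G.Adj y)).card : ℝ) := lt_of_le_of_lt h1 (hTdeg y hy)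
      have : m < (T.filter (G.Adj y)).card := by exact_mod_cast h2
      omega
    have hg : ∀ (a : V) (cyc : G.Walk a a), cyc.IsCycle → 2*r+1 ≤ cyc.length := by
      intro a cyc hcyc
      have h1 : G.egirth ≤ (cyc.length : ℕ∞) := le_egirth.mp le_rfl a cyc hcyc
      have h2 : (k:ℕ∞) < (cyc.length : ℕ∞) := lt_of_lt_of_le hgirth h1
      have h3 : k < cyc.length := by exact_mod_cast h2
      omega
    obtain ⟨v, hv⟩ := hTne
    have hkey := path_count G T m r hr1 hSdeg hg v hv
    rw [hcard] at hkey
    have hmx : x ≤ (m:ℝ) := by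
      have h1 : 2*x - 1 < (m:ℝ) := Nat.sub_one_lt_floor (2*x)
      linarith
    have hxr : x ^ r = (n:ℝ) := by
      rw [hx, ← Real.rpow_natCast ((n:ℝ) ^ ((1:ℝ)/(r:ℝ))) r, ← Real.rpow_mul (le_of_lt hnR)]
      rw [one_div, inv_mul_cancel₀ (Nat.cast_ne_zero.mpr (by omega) : (r:ℝ) ≠ 0), Real.rpow_one]
    have hge : (n:ℝ) ≤ ((m:ℕ):ℝ) ^ r := by
      rw [← hxr]
      exact pow_le_pow_left₀ (by positivity) hmx r
    have hle : ((m ^ r : ℕ):ℝ) + 1 ≤ (n:ℝ) := by exact_mod_cast hkey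
    push_cast at hle
    linarith
end

section
/- The output of the greedy spanner algorithm with parameter t is a t-spanner of the input weighted graph G, regardless of the order in which the edges are processed. Precisely: if E' is built by iterating over the edges of G in any order and adding edge uv to E' whenever the current distance d_{(V,E')}(u,v) exceeds t·w_{uv}, then the final graph (V,E') satisfies d_{(V,E')}(u,v) ≤ t·d_G(u,v) for all vertices u,v. -/
open scoped ENNReal Classical

variable {V : Type*}

/-- The total weight of a walk: the sum of the weights of its (directed) edges. -/
noncomputable def walkWeight (w : V → V → ℝ≥0∞) {G : SimpleGraph V} {u v : V}
    (p : G.Walk u v) : ℝ≥0∞ :=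
  (p.darts.map (fun d => w d.toProd.1 d.toProd.2)).sum

/-- Weighted shortest-path distance: the infimum of walk weights (`⊤` if unreachable). -/
noncomputable def wdist (G : SimpleGraph V) (w : V → V → ℝ≥0∞) (u v : V) : ℝ≥0∞ :=
  ⨅ p : G.Walk u v, walkWeight w p

/-- One greedy pass: process the edges in the given list order, adding an edge whenever the
current spanner distance between its endpoints exceeds `t` times its weight. -/
noncomputable def greedyAux (w : V → V → ℝ≥0∞) (t : ℝ≥0∞) :
    List (V × V) → SimpleGraph V → SimpleGraph V
  | [], G' => G'
  | e :: rest, G' =>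
      greedyAux w t rest
        (if t * w e.1 e.2 < wdist G' w e.1 e.2
          then G' ⊔ SimpleGraph.fromEdgeSet {s(e.1, e.2)} else G')


section lemmas
variable {G G₁ G₂ : SimpleGraph V} {w : V → V → ℝ≥0∞} {u v x : V}

lemma walkWeight_nil : walkWeight w (SimpleGraph.Walk.nil : G.Walk u u) = 0 := rfl

lemma walkWeight_cons (h : G.Adj u x) (p : G.Walk x v) :
    walkWeight w (SimpleGraph.Walk.cons h p) = w u x + walkWeight w p := by
  simp [walkWeight]

lemma walkWeight_append (p : G.Walk u x) (q : G.Walk x v) :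
    walkWeight w (p.append q) = walkWeight w p + walkWeight w q := by
  simp [walkWeight]

lemma wdist_le (p : G.Walk u v) : wdist G w u v ≤ walkWeight w p := iInf_le _ p

lemma wdist_self : wdist G w u u = 0 :=
  le_antisymm (wdist_le SimpleGraph.Walk.nil) (zero_le)

lemma wdist_triangle : wdist G w u v ≤ wdist G w u x + wdist G w x v := by
  rw [show wdist G w u x = ⨅ p : G.Walk u x, walkWeight w p from rfl, ENNReal.iInf_add]
  refine le_iInf fun p => ?_
  rw [show wdist G w x v = ⨅ q : G.Walk x v, walkWeight w q from rfl, ENNReal.add_iInf]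
  refine le_iInf fun q => ?_
  exact le_trans (wdist_le (p.append q)) (le_of_eq (walkWeight_append p q))

lemma wdist_anti (h : G₁ ≤ G₂) : wdist G₂ w u v ≤ wdist G₁ w u v := by
  refine le_iInf fun p => ?_
  induction p with
  | nil => simpa [walkWeight_nil] using wdist_self.le
  | cons ha q ih =>
      rw [walkWeight_cons]
      refine le_trans wdist_triangle (add_le_add ?_ ih)
      have := wdist_le (w := w) (SimpleGraph.Walk.cons (h ha) SimpleGraph.Walk.nil)
      simpa [walkWeight_cons, walkWeight_nil] using this

lemma wdist_symm (hsymm : ∀ u v, w u v = w v u) : wdist G w u v = wdist G w v u := by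
  have key : ∀ (a b : V), wdist G w a b ≤ wdist G w b a := by
    intro a b
    refine le_iInf fun p => ?_
    refine le_trans (wdist_le p.reverse) (le_of_eq ?_)
    simp only [walkWeight, SimpleGraph.Walk.darts_reverse, List.map_reverse, List.sum_reverse,
      List.map_map]
    congr 1
    refine List.map_congr_left fun d _ => ?_
    simp [SimpleGraph.Dart.symm, hsymm d.toProd.1 d.toProd.2]
  exact le_antisymm (key u v) (key v u)

lemma le_greedyAux (t : ℝ≥0∞) : ∀ (l : List (V × V)) (G' : SimpleGraph V),
    G' ≤ greedyAux w t l G'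
  | [], G' => le_refl _
  | e :: rest, G' => by
      rw [greedyAux]
      refine le_trans ?_ (le_greedyAux t rest _)
      split <;> simp

lemma greedy_edge_bound (t : ℝ≥0∞) (ht : 1 ≤ t) :
    ∀ (l : List (V × V)) (G₀ : SimpleGraph V), (∀ e ∈ l, e.1 ≠ e.2) →
      ∀ e ∈ l, wdist (greedyAux w t l G₀) w e.1 e.2 ≤ t * w e.1 e.2
  | [], _, _, e, he => absurd he List.not_mem_nil
  | f :: rest, G₀, hne, e, he => by
      rw [greedyAux]
      rcases List.mem_cons.1 he with rfl | he'
      · set G₁ := if t * w e.1 e.2 < wdist G₀ w e.1 e.2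
            then G₀ ⊔ SimpleGraph.fromEdgeSet {s(e.1, e.2)} else G₀ with hG₁
        have h1 : wdist G₁ w e.1 e.2 ≤ t * w e.1 e.2 := by
          rw [hG₁]; split
          · have hadj : (G₀ ⊔ SimpleGraph.fromEdgeSet {s(e.1, e.2)}).Adj e.1 e.2 := by
              right
              exact (SimpleGraph.fromEdgeSet_adj _).2 ⟨rfl, hne e List.mem_cons_self⟩
            have := wdist_le (w := w) (SimpleGraph.Walk.cons hadj SimpleGraph.Walk.nil)
            rw [walkWeight_cons, walkWeight_nil, add_zero] at this
            calc wdist _ w e.1 e.2 ≤ w e.1 e.2 := this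
              _ = 1 * w e.1 e.2 := (one_mul _).symm
              _ ≤ t * w e.1 e.2 := mul_le_mul_left ht _
          · exact le_of_not_gt ‹¬ _›
        exact le_trans (wdist_anti (le_greedyAux t rest G₁)) h1
      · exact greedy_edge_bound t ht rest _ (fun e h => hne e (List.mem_cons_of_mem f h)) e he'

lemma spanner_of_edges {H : SimpleGraph V} {t : ℝ≥0∞}
    (hedge : ∀ a b, G.Adj a b → wdist H w a b ≤ t * w a b)
    (p : G.Walk u v) : wdist H w u v ≤ t * walkWeight w p := by
  induction p with
  | nil => simp [walkWeight_nil, wdist_self]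
  | cons ha q ih =>
      rw [walkWeight_cons, mul_add]
      exact le_trans wdist_triangle (add_le_add (hedge _ _ ha) ih)

end lemmas


/-- The output of the greedy spanner algorithm with parameter `t` is a `t`-spanner of `G`,
regardless of the order in which the edges are processed. -/
theorem greedy_is_spanner [Fintype V]
    (G : SimpleGraph V) (hconn : G.Connected)
    (w : V → V → ℝ≥0∞) (hsymm : ∀ u v, w u v = w v u)
    (hpos : ∀ u v, G.Adj u v → 0 < w u v) (hfin : ∀ u v, G.Adj u v → w u v ≠ ⊤)
    (t : ℝ≥0∞) (ht : 1 ≤ t)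
    (l : List (V × V))
    (hl₁ : ∀ e ∈ l, G.Adj e.1 e.2)
    (hl₂ : ∀ u v : V, G.Adj u v → (u, v) ∈ l ∨ (v, u) ∈ l) :
    ∀ u v : V, wdist (greedyAux w t l ⊥) w u v ≤ t * wdist G w u v := by
  intro u v
  set H := greedyAux w t l ⊥ with hH
  have hne : ∀ e ∈ l, e.1 ≠ e.2 := fun e he => (hl₁ e he).ne
  have hedge : ∀ a b, G.Adj a b → wdist H w a b ≤ t * w a b := by
    intro a b hab
    rcases hl₂ a b hab with h | h
    · exact greedy_edge_bound t ht l ⊥ hne (a, b) h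
    · rw [wdist_symm hsymm, hsymm a b]
      exact greedy_edge_bound t ht l ⊥ hne (b, a) h
  have key : ∀ p : G.Walk u v, wdist H w u v ≤ t * walkWeight w p :=
    spanner_of_edges hedge
  by_cases htop : t = ⊤
  · by_cases huv : u = v
    · subst huv; simp [wdist_self]
    · have hpos' : 0 < wdist G w u v := by
        set c : ℝ≥0∞ := Finset.univ.inf
          (fun p : V × V => if G.Adj p.1 p.2 then w p.1 p.2 else ⊤) with hc
        have hcpos : 0 < c := by
          rw [hc, Finset.lt_inf_iff (by norm_num : (0:ℝ≥0∞) < ⊤)]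
          intro p _
          split
          · exact hpos _ _ ‹_›
          · exact ENNReal.zero_lt_top
        refine lt_of_lt_of_le hcpos (le_iInf fun p => ?_)
        cases p with
        | nil => exact absurd rfl huv
        | cons ha q =>
            rename_i x
            rw [walkWeight_cons]
            refine le_trans ?_ le_self_add
            have := Finset.inf_le (f := fun p : V × V => if G.Adj p.1 p.2 then w p.1 p.2 else ⊤)
              (Finset.mem_univ (u, x))
            simpa [ha] using this
      rw [htop, ENNReal.top_mul hpos'.ne']
      exact le_top
  · have h0 : t ≠ 0 := fun h => by simp [h] at ht
    rw [show wdist G w u v = ⨅ p : G.Walk u v, walkWeight w p from rfl,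
      ENNReal.mul_iInf_of_ne h0 htop]
    exact le_iInf key
end

section
/- Every graph G has a 'consistent tiebreaking' scheme: a map π assigning to each ordered pair (u,v) of vertices a shortest u-v path such that whenever x and y both lie on π(w,z) (with x preceding y), the subpath of π(w,z) from x to y equals π(x,y). -/
open scoped ENNReal Classical

variable {V : Type*}

namespace ConsistentTB

open SimpleGraph Walk

variable {G : SimpleGraph V} (w : V → V → ℝ≥0∞)

@[simp] lemma walkWeight_nil {u : V} : walkWeight w (Walk.nil : G.Walk u u) = 0 := by
  simp [walkWeight]

@[simp] lemma walkWeight_cons {u v x : V} (h : G.Adj u v) (p : G.Walk v x) :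
    walkWeight w (Walk.cons h p) = w u v + walkWeight w p := by
  simp [walkWeight]

lemma walkWeight_append {u v x : V} (p : G.Walk u v) (q : G.Walk v x) :
    walkWeight w (p.append q) = walkWeight w p + walkWeight w q := by
  simp [walkWeight, Walk.darts_append]

lemma walkWeight_ne_top (hfin : ∀ u v, G.Adj u v → w u v ≠ ⊤) {u v : V} (p : G.Walk u v) :
    walkWeight w p ≠ ⊤ := by
  induction p with
  | nil => simp
  | cons h p ih => simp [ENNReal.add_ne_top, hfin _ _ h, ih]

lemma walkWeight_bypass_le [DecidableEq V] {u v : V} (p : G.Walk u v) :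
    walkWeight w p.bypass ≤ walkWeight w p := by
  have hnd : p.bypass.darts.Nodup :=
    Walk.darts_nodup_of_support_nodup p.bypass_isPath.support_nodup
  have hsp : List.Subperm p.bypass.darts p.darts :=
    List.subperm_of_subset hnd p.darts_bypass_subset
  have hle : (↑p.bypass.darts : Multiset G.Dart) ≤ ↑p.darts := Multiset.coe_le.2 hsp
  have hmap : ((↑p.bypass.darts : Multiset G.Dart).map fun d => w d.toProd.1 d.toProd.2)
      ≤ ((↑p.darts : Multiset G.Dart).map fun d => w d.toProd.1 d.toProd.2) :=
    Multiset.map_le_map hle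
  obtain ⟨t, ht⟩ := Multiset.le_iff_exists_add.1 hmap
  have := congrArg Multiset.sum ht
  simp only [Multiset.sum_add] at this
  show (p.bypass.darts.map fun d => w d.toProd.1 d.toProd.2).sum
      ≤ (p.darts.map fun d => w d.toProd.1 d.toProd.2).sum
  rw [← Multiset.sum_coe, ← Multiset.sum_coe, ← Multiset.map_coe, ← Multiset.map_coe, this]
  exact le_add_right le_rfl

lemma bypass_length_lt [DecidableEq V] {u v : V} {q : G.Walk u v} (h : ¬ q.IsPath) :
    q.bypass.length < q.length := by
  rcases lt_or_ge q.bypass.length q.length with h' | h'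
  · exact h'
  · exact absurd (q.bypass_eq_self_of_length_le h' ▸ q.bypass_isPath) h

lemma eq_of_support_eq {u v : V} (p : G.Walk u v) :
    ∀ q : G.Walk u v, p.support = q.support → p = q := by
  induction p with
  | nil =>
    intro q h
    cases q with
    | nil => rfl
    | cons h' q' =>
      exfalso
      have := congrArg List.length h
      simp [Walk.length_support] at this
  | cons hadj p ih =>
    intro q h
    cases q with
    | nil =>
      exfalso
      have := congrArg List.length h
      simp [Walk.length_support] at this
    | cons hadj' q' =>
      have hsup : p.support = q'.support := by simpa using h
      have heads := hsup
      rw [p.support_eq_cons, q'.support_eq_cons] at heads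
      obtain ⟨hw, -⟩ := List.cons.inj heads
      subst hw
      rw [ih q' hsup]

/-- The key used to select a canonical shortest path: weight, then length,
then lexicographic order of the support. -/
noncomputable def key [LinearOrder V] {u v : V} (p : G.Walk u v) : ℝ≥0∞ ×ₗ (ℕ ×ₗ List V) :=
  toLex (walkWeight w p, toLex (p.length, p.support))

lemma key_inj [LinearOrder V] {u v : V} {p q : G.Walk u v} (h : key w p = key w q) : p = q := by
  unfold key at h
  rw [toLex_inj, Prod.mk.injEq] at h
  obtain ⟨-, h2⟩ := h
  rw [toLex_inj, Prod.mk.injEq] at h2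
  exact eq_of_support_eq p q h2.2

lemma weight_le_of_key_le [LinearOrder V] {u v : V} {p q : G.Walk u v}
    (h : key w p ≤ key w q) : walkWeight w p ≤ walkWeight w q := by
  unfold key at h
  rw [Prod.Lex.le_iff] at h
  simp only [ofLex_toLex] at h
  rcases h with h | ⟨h, -⟩
  · exact le_of_lt h
  · exact le_of_eq h

lemma key_bypass_lt [LinearOrder V] [DecidableEq V] {u v : V} {q : G.Walk u v}
    (h : ¬ q.IsPath) : key w q.bypass < key w q := by
  unfold key
  rw [Prod.Lex.lt_iff]
  simp only [ofLex_toLex]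
  rcases lt_or_eq_of_le (walkWeight_bypass_le w q) with hW | hW
  · exact Or.inl hW
  · refine Or.inr ⟨hW, ?_⟩
    rw [Prod.Lex.lt_iff]
    simp only [ofLex_toLex]
    exact Or.inl (bypass_length_lt h)

lemma exists_min [Fintype V] [LinearOrder V] {u v : V} (hr : G.Reachable u v) :
    ∃ p : G.Walk u v, p.IsPath ∧ ∀ q : G.Walk u v, key w p ≤ key w q := by
  classical
  have hfin : {p : G.Walk u v | p.IsPath}.Finite := by
    have hsub : {p : G.Walk u v | p.IsPath}
        ⊆ {p : G.Walk u v | p.IsPath ∧ p.length < Fintype.card V} :=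
      fun p hp => ⟨hp, hp.length_lt⟩
    exact Set.Finite.subset (Set.toFinite _) hsub
  obtain ⟨p₀⟩ := hr
  have hne : {p : G.Walk u v | p.IsPath}.Nonempty := ⟨p₀.bypass, p₀.bypass_isPath⟩
  obtain ⟨p, hp, hmin⟩ := Set.exists_min_image _ (key w) hfin hne
  refine ⟨p, hp, fun q => ?_⟩
  by_cases hq : q.IsPath
  · exact hmin q hq
  · exact le_of_lt (lt_of_le_of_lt (hmin q.bypass q.bypass_isPath) (key_bypass_lt w hq))

lemma lex_append_right_of_length_eq {α : Type*} [LinearOrder α] {A B : List α}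
    (h : List.Lex (· < ·) A B) :
    A.length = B.length → ∀ d : List α, List.Lex (· < ·) (A ++ d) (B ++ d) := by
  induction h with
  | nil => intro hlen; simp at hlen
  | rel hab => intro _ d; exact List.Lex.rel hab
  | cons h ih => intro hlen d; exact List.Lex.cons (ih (by simpa using hlen) d)

lemma key_append_lt [LinearOrder V] {a x y b : V}
    (q₁ : G.Walk a x) (q₂ r : G.Walk x y) (q₃ : G.Walk y b)
    (htop : walkWeight w (q₁.append (q₂.append q₃)) ≠ ⊤)
    (h : key w r < key w q₂) :
    key w (q₁.append (r.append q₃)) < key w (q₁.append (q₂.append q₃)) := by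
  rw [walkWeight_append, walkWeight_append, ENNReal.add_ne_top, ENNReal.add_ne_top] at htop
  obtain ⟨h1a, -, h1c⟩ := htop
  unfold key at h ⊢
  rw [Prod.Lex.lt_iff] at h ⊢
  simp only [ofLex_toLex] at h ⊢
  rcases h with hW | ⟨hW, h2⟩
  · left
    simp only [walkWeight_append]
    exact ENNReal.add_lt_add_left h1a (ENNReal.add_lt_add_right h1c hW)
  · have hWeq : walkWeight w (q₁.append (r.append q₃))
        = walkWeight w (q₁.append (q₂.append q₃)) := by
      simp only [walkWeight_append, hW]
    rw [Prod.Lex.lt_iff] at h2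
    simp only [ofLex_toLex] at h2
    refine Or.inr ⟨hWeq, ?_⟩
    rw [Prod.Lex.lt_iff]
    simp only [ofLex_toLex]
    rcases h2 with hL | ⟨hL, hS⟩
    · left
      simp only [Walk.length_append]
      omega
    · right
      constructor
      · simp only [Walk.length_append, hL]
      · show List.Lex (· < ·) _ _
        rw [Walk.support_append q₁ (r.append q₃), Walk.support_append q₁ (q₂.append q₃),
          Walk.tail_support_append, Walk.tail_support_append]
        refine List.Lex.append_left _ ?_ q₁.support
        have hS' : List.Lex (· < ·) r.support q₂.support := hS
        rw [r.support_eq_cons, q₂.support_eq_cons] at hS'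
        have htail : List.Lex (· < ·) r.support.tail q₂.support.tail := by
          cases hS' with
          | cons h => exact h
          | rel h => exact absurd h (lt_irrefl x)
        have hlen : r.support.tail.length = q₂.support.tail.length := by
          have h1 := r.length_support
          have h2 := q₂.length_support
          have h3 := congrArg List.length r.support_eq_cons
          have h4 := congrArg List.length q₂.support_eq_cons
          simp only [List.length_cons] at h3 h4
          omega
        exact lex_append_right_of_length_eq htail hlen q₃.support.tail

end ConsistentTB

/-- Every (connected, weighted) graph has a consistent tiebreaking scheme: an assignment
`π` of a shortest path to each ordered pair of vertices such that every subpath of a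
chosen shortest path is itself the chosen shortest path between its endpoints. -/
theorem exists_consistent_tiebreaking [Fintype V]
    (G : SimpleGraph V) (hconn : G.Connected)
    (w : V → V → ℝ≥0∞) (hsymm : ∀ u v, w u v = w v u)
    (hpos : ∀ u v, G.Adj u v → 0 < w u v) (hfin : ∀ u v, G.Adj u v → w u v ≠ ⊤) :
    ∃ π : ∀ u v : V, G.Walk u v,
      (∀ u v : V, (π u v).IsPath ∧ walkWeight w (π u v) = wdist G w u v) ∧
      (∀ (a b x y : V) (q₁ : G.Walk a x) (q₂ : G.Walk x y) (q₃ : G.Walk y b),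
        π a b = q₁.append (q₂.append q₃) → q₂ = π x y) := by
  classical
  letI : LinearOrder V := LinearOrder.lift' (Fintype.equivFin V) (Fintype.equivFin V).injective
  have hmin : ∀ u v : V, ∃ p : G.Walk u v, p.IsPath ∧
      ∀ q : G.Walk u v, ConsistentTB.key w p ≤ ConsistentTB.key w q :=
    fun u v => ConsistentTB.exists_min w (hconn.preconnected u v)
  choose π hπpath hπmin using hmin
  refine ⟨π, fun u v => ⟨hπpath u v, ?_⟩, ?_⟩
  · refine le_antisymm (le_iInf fun q => ?_) (iInf_le _ _)
    exact ConsistentTB.weight_le_of_key_le w (hπmin u v q)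
  · intro a b x y q₁ q₂ q₃ hdecomp
    by_contra hne
    have hlt : ConsistentTB.key w (π x y) < ConsistentTB.key w q₂ :=
      lt_of_le_of_ne (hπmin x y q₂) fun h => hne (ConsistentTB.key_inj w h).symm
    have htop : walkWeight w (q₁.append (q₂.append q₃)) ≠ ⊤ := by
      rw [← hdecomp]
      exact ConsistentTB.walkWeight_ne_top w hfin _
    have hkey := ConsistentTB.key_append_lt w q₁ q₂ (π x y) q₃ htop hlt
    rw [← hdecomp] at hkey
    exact absurd (hπmin a b (q₁.append ((π x y).append q₃))) (not_le.2 hkey)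
end

section
/- Let π be a consistent tiebreaking scheme on a directed graph G, let P be a set of vertex pairs, and let H be the subgraph formed by the union of the paths π(p) for p ∈ P. Then the number of branching triples of H (sets of three distinct edges of H entering a common vertex) is at most C(|P|,3): for any three pairs in P there is at most one branching triple whose three edges are assigned among the three corresponding paths. -/
open scoped ENNReal Classical

variable {V : Type*}

lemma dart_snd_unique {G : SimpleGraph V} {u v : V} {p : G.Walk u v} (hp : p.IsPath)
    {d₁ d₂ : G.Dart} (h₁ : d₁ ∈ p.darts) (h₂ : d₂ ∈ p.darts)
    (h : d₁.toProd.2 = d₂.toProd.2) : d₁ = d₂ := by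
  have hn : (p.darts.map (fun d => d.toProd.2)).Nodup := by
    rw [SimpleGraph.Walk.map_snd_darts]
    have := (p.isPath_def.mp hp)
    rw [p.support_eq_cons] at this
    exact this.tail
  exact List.inj_on_of_nodup_map hn h₁ h₂ h

lemma walk_split {G : SimpleGraph V} [DecidableEq V] {a b : V} (W : G.Walk a b) {x y : V}
    (hx : x ∈ W.support) (hy : y ∈ W.support) :
    (∃ (q₁ : G.Walk a x) (q₂ : G.Walk x y) (q₃ : G.Walk y b), W = q₁.append (q₂.append q₃)) ∨
    (∃ (q₁ : G.Walk a y) (q₂ : G.Walk y x) (q₃ : G.Walk x b), W = q₁.append (q₂.append q₃)) := by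
  by_cases h : y ∈ (W.dropUntil x hx).support
  · left
    exact ⟨W.takeUntil x hx, (W.dropUntil x hx).takeUntil y h, (W.dropUntil x hx).dropUntil y h,
      by rw [SimpleGraph.Walk.take_spec, SimpleGraph.Walk.take_spec]⟩
  · right
    have hy' : y ∈ (W.takeUntil x hx).support := by
      rw [← SimpleGraph.Walk.take_spec W hx, SimpleGraph.Walk.support_append] at hy
      rcases List.mem_append.mp hy with h' | h'
      · exact h'
      · exact absurd (List.mem_of_mem_tail h') h
    refine ⟨(W.takeUntil x hx).takeUntil y hy', (W.takeUntil x hx).dropUntil y hy',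
      W.dropUntil x hx, ?_⟩
    rw [SimpleGraph.Walk.append_assoc, SimpleGraph.Walk.take_spec, SimpleGraph.Walk.take_spec]

lemma exists_dart_into {G : SimpleGraph V} {x y : V} (q : G.Walk x y) (hxy : x ≠ y) :
    ∃ d ∈ q.darts, d.toProd.2 = y := by
  have hy : y ∈ q.support.tail := by
    have h := q.end_mem_support
    rw [q.support_eq_cons] at h
    rcases List.mem_cons.mp h with h | h
    · exact absurd h.symm hxy
    · exact h
  rw [← SimpleGraph.Walk.map_snd_darts] at hy
  simpa using hy

/-- Branching-triple bound: if `π` is a consistent tiebreaking scheme, `P` a set of vertex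
pairs and `H` the union of the paths `π(p)`, `p ∈ P`, then the number of branching triples
of `H` (sets of three distinct directed edges entering a common vertex) is at most
`C(|P|, 3)`. -/
theorem branching_triples_le [Fintype V]
    (G : SimpleGraph V) (hconn : G.Connected)
    (w : V → V → ℝ≥0∞) (hsymm : ∀ u v, w u v = w v u)
    (hpos : ∀ u v, G.Adj u v → 0 < w u v) (hfin : ∀ u v, G.Adj u v → w u v ≠ ⊤)
    (π : ∀ u v : V, G.Walk u v)
    (hπ : ∀ u v : V, (π u v).IsPath ∧ walkWeight w (π u v) = wdist G w u v)
    (hcons : ∀ (a b x y : V) (q₁ : G.Walk a x) (q₂ : G.Walk x y) (q₃ : G.Walk y b),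
      π a b = q₁.append (q₂.append q₃) → q₂ = π x y)
    (P : Finset (V × V)) :
    -- `D` is the set of directed edges of `H = (V, ⋃_{p ∈ P} π(p))`
    letI D : Finset (V × V) := Finset.univ.filter
      (fun e : V × V => ∃ p ∈ P, e ∈ (π p.1 p.2).darts.map SimpleGraph.Dart.toProd)
    -- the number of branching triples of `H` is at most `C(|P|, 3)`
    ∑ v : V, ((D.filter (fun e => e.2 = v)).card).choose 3 ≤ P.card.choose 3 := by
  classical
  set D : Finset (V × V) := Finset.univ.filter
      (fun e : V × V => ∃ p ∈ P, e ∈ (π p.1 p.2).darts.map SimpleGraph.Dart.toProd) with hDdef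
  -- choice of an assigned pair for each edge
  have hD : ∀ e ∈ D, ∃ p, p ∈ P ∧ ∃ d, d ∈ (π p.1 p.2).darts ∧ d.toProd = e := by
    intro e he
    rw [hDdef, Finset.mem_filter] at he
    simp only [Finset.mem_univ, true_and] at he
    obtain ⟨p, hp, hd⟩ := he
    rw [List.mem_map] at hd
    obtain ⟨d, hd, rfl⟩ := hd
    exact ⟨p, hp, d, hd, rfl⟩
  choose! f hfP df hdf hdfe using hD
  -- uniqueness of the in-edge of a path at a vertex
  have uniq : ∀ {a b : V} {e₁ e₂ : V × V}, (∃ d ∈ (π a b).darts, d.toProd = e₁) →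
      (∃ d ∈ (π a b).darts, d.toProd = e₂) → e₁.2 = e₂.2 → e₁ = e₂ := by
    rintro a b e₁ e₂ ⟨d₁, hd₁, rfl⟩ ⟨d₂, hd₂, rfl⟩ h
    rw [dart_snd_unique (hπ a b).1 hd₁ hd₂ h]
  -- f is injective on edges entering a common vertex
  have finj : ∀ (v : V) (e₁ e₂ : V × V), e₁ ∈ D.filter (fun e => e.2 = v) →
      e₂ ∈ D.filter (fun e => e.2 = v) → f e₁ = f e₂ → e₁ = e₂ := by
    intro v e₁ e₂ h₁ h₂ hf
    rw [Finset.mem_filter] at h₁ h₂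
    refine uniq ⟨df e₁ h₁.1, hdf _ h₁.1, hdfe _ h₁.1⟩ ?_ (h₁.2.trans h₂.2.symm)
    rw [hf]
    exact ⟨df e₂ h₂.1, hdf _ h₂.1, hdfe _ h₂.1⟩
  calc ∑ v : V, ((D.filter (fun e => e.2 = v)).card).choose 3
      = ∑ v : V, ((D.filter (fun e => e.2 = v)).powersetCard 3).card := by
        simp [Finset.card_powersetCard]
    _ = (Finset.univ.sigma (fun v => (D.filter (fun e => e.2 = v)).powersetCard 3)).card := by
        rw [Finset.card_sigma]
    _ ≤ (P.powersetCard 3).card := by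
        apply Finset.card_le_card_of_injOn (fun x => x.2.image f)
        · -- maps into powersetCard 3 of P
          rintro ⟨v, T⟩ hvT
          rw [Finset.mem_coe, Finset.mem_sigma] at hvT
          obtain ⟨hT, hTcard⟩ := Finset.mem_powersetCard.mp hvT.2
          rw [Finset.mem_coe, Finset.mem_powersetCard]
          constructor
          · intro p hp
            rw [Finset.mem_image] at hp
            obtain ⟨e, he, rfl⟩ := hp
            exact hfP e (Finset.mem_filter.mp (hT he)).1
          · rw [Finset.card_image_of_injOn (fun e₁ h₁ e₂ h₂ => finj v e₁ e₂ (hT h₁) (hT h₂))]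
            exact hTcard
        · -- injectivity
          rintro ⟨v, T⟩ hvT ⟨v', T'⟩ hvT' himg
          simp only [Finset.mem_coe, Finset.mem_sigma] at hvT hvT'
          obtain ⟨hT, hTcard⟩ := Finset.mem_powersetCard.mp hvT.2
          obtain ⟨hT', hTcard'⟩ := Finset.mem_powersetCard.mp hvT'.2
          simp only at himg
          -- from a pair in the image, recover the unique edge of that path into v (resp. v')
          have hedge : ∀ p ∈ T.image f, ∃ e ∈ D, e.2 = v ∧ f e = p ∧
              ∃ d ∈ (π p.1 p.2).darts, d.toProd = e := by
            intro p hp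
            rw [Finset.mem_image] at hp
            obtain ⟨e, he, rfl⟩ := hp
            have heD := Finset.mem_filter.mp (hT he)
            exact ⟨e, heD.1, heD.2, rfl, df e heD.1, hdf _ heD.1, hdfe _ heD.1⟩
          have hedge' : ∀ p ∈ T.image f, ∃ e ∈ D, e.2 = v' ∧ f e = p ∧
              ∃ d ∈ (π p.1 p.2).darts, d.toProd = e := by
            intro p hp
            rw [himg, Finset.mem_image] at hp
            obtain ⟨e, he, rfl⟩ := hp
            have heD := Finset.mem_filter.mp (hT' he)
            exact ⟨e, heD.1, heD.2, rfl, df e heD.1, hdf _ heD.1, hdfe _ heD.1⟩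
          -- main claim: v = v'
          have hvv : v = v' := by
            by_contra hvv
            -- both v and v' lie on each path assigned
            have hsupp : ∀ p ∈ T.image f, v ∈ (π p.1 p.2).support ∧ v' ∈ (π p.1 p.2).support := by
              intro p hp
              obtain ⟨e, -, he2, -, d, hd, hde⟩ := hedge p hp
              obtain ⟨e', -, he2', -, d', hd', hde'⟩ := hedge' p hp
              constructor
              · have := SimpleGraph.Walk.dart_snd_mem_support_of_mem_darts _ hd
                rwa [show d.toProd.2 = v from by rw [hde, he2]] at this
              · have := SimpleGraph.Walk.dart_snd_mem_support_of_mem_darts _ hd'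
                rwa [show d'.toProd.2 = v' from by rw [hde', he2']] at this
            -- for each path, π v v' or π v' v is a subpath
            have hsub : ∀ p ∈ T.image f,
                (∀ d ∈ (π v v').darts, d ∈ (π p.1 p.2).darts) ∨
                (∀ d ∈ (π v' v).darts, d ∈ (π p.1 p.2).darts) := by
              intro p hp
              obtain ⟨hv, hv'⟩ := hsupp p hp
              rcases walk_split (π p.1 p.2) hv hv' with ⟨q₁, q₂, q₃, heq⟩ | ⟨q₁, q₂, q₃, heq⟩
              · left
                intro d hd
                rw [← hcons p.1 p.2 v v' q₁ q₂ q₃ heq] at hd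
                rw [heq]
                simp only [SimpleGraph.Walk.darts_append, List.mem_append]
                exact Or.inr (Or.inl hd)
              · right
                intro d hd
                rw [← hcons p.1 p.2 v' v q₁ q₂ q₃ heq] at hd
                rw [heq]
                simp only [SimpleGraph.Walk.darts_append, List.mem_append]
                exact Or.inr (Or.inl hd)
            -- two paths sharing π v v' give the same in-edge at v'; contradiction
            have contra1 : ∀ p ∈ T.image f, ∀ q ∈ T.image f, p ≠ q →
                (∀ d ∈ (π v v').darts, d ∈ (π p.1 p.2).darts) →
                (∀ d ∈ (π v v').darts, d ∈ (π q.1 q.2).darts) → False := by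
              intro p hp q hq hpq hsp hsq
              obtain ⟨d, hd, hd2⟩ := exists_dart_into (π v v') hvv
              obtain ⟨e, -, he2, hfe, hde⟩ := hedge' p hp
              obtain ⟨e', -, he2', hfe', hde'⟩ := hedge' q hq
              have h1 : e = d.toProd := uniq hde ⟨d, hsp d hd, rfl⟩ (by rw [he2, hd2])
              have h2 : e' = d.toProd := uniq hde' ⟨d, hsq d hd, rfl⟩ (by rw [he2', hd2])
              exact hpq (by rw [← hfe, ← hfe', h1, h2])
            have contra2 : ∀ p ∈ T.image f, ∀ q ∈ T.image f, p ≠ q →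
                (∀ d ∈ (π v' v).darts, d ∈ (π p.1 p.2).darts) →
                (∀ d ∈ (π v' v).darts, d ∈ (π q.1 q.2).darts) → False := by
              intro p hp q hq hpq hsp hsq
              obtain ⟨d, hd, hd2⟩ := exists_dart_into (π v' v) (Ne.symm hvv)
              obtain ⟨e, -, he2, hfe, hde⟩ := hedge p hp
              obtain ⟨e', -, he2', hfe', hde'⟩ := hedge q hq
              have h1 : e = d.toProd := uniq hde ⟨d, hsp d hd, rfl⟩ (by rw [he2, hd2])
              have h2 : e' = d.toProd := uniq hde' ⟨d, hsq d hd, rfl⟩ (by rw [he2', hd2])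
              exact hpq (by rw [← hfe, ← hfe', h1, h2])
            -- the image has three distinct elements
            have hIcard : (T.image f).card = 3 := by
              rw [Finset.card_image_of_injOn (fun e₁ h₁ e₂ h₂ => finj v e₁ e₂ (hT h₁) (hT h₂))]
              exact hTcard
            obtain ⟨p₁, p₂, p₃, h12, h13, h23, hIeq⟩ := Finset.card_eq_three.mp hIcard
            have hp₁ : p₁ ∈ T.image f := by rw [hIeq]; simp
            have hp₂ : p₂ ∈ T.image f := by rw [hIeq]; simp
            have hp₃ : p₃ ∈ T.image f := by rw [hIeq]; simp
            rcases hsub p₁ hp₁ with h1 | h1 <;> rcases hsub p₂ hp₂ with h2 | h2 <;>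
              rcases hsub p₃ hp₃ with h3 | h3
            · exact contra1 p₁ hp₁ p₂ hp₂ h12 h1 h2
            · exact contra1 p₁ hp₁ p₂ hp₂ h12 h1 h2
            · exact contra1 p₁ hp₁ p₃ hp₃ h13 h1 h3
            · exact contra2 p₂ hp₂ p₃ hp₃ h23 h2 h3
            · exact contra1 p₂ hp₂ p₃ hp₃ h23 h2 h3
            · exact contra2 p₁ hp₁ p₃ hp₃ h13 h1 h3
            · exact contra2 p₁ hp₁ p₂ hp₂ h12 h1 h2
            · exact contra2 p₁ hp₁ p₂ hp₂ h12 h1 h2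
          subst hvv
          -- now show T = T'
          have hTT : T ⊆ T' := by
            intro e he
            have hp : f e ∈ T.image f := Finset.mem_image_of_mem f he
            rw [himg, Finset.mem_image] at hp
            obtain ⟨e', he', hfe'⟩ := hp
            have heD := Finset.mem_filter.mp (hT he)
            have heD' := Finset.mem_filter.mp (hT' he')
            have : e = e' := by
              refine uniq ⟨df e heD.1, hdf _ heD.1, hdfe _ heD.1⟩ ?_ (heD.2.trans heD'.2.symm)
              rw [← hfe']
              exact ⟨df e' heD'.1, hdf _ heD'.1, hdfe _ heD'.1⟩
            rw [this]; exact he'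
          have : T = T' := Finset.eq_of_subset_of_card_le hTT (by rw [hTcard, hTcard'])
          rw [this]
    _ = P.card.choose 3 := Finset.card_powersetCard 3 P
end

section
/- The bipartite double cover construction preserves spanners: let G = (V,E) be a graph and let G' be the bipartite graph with vertex set V_L ∪ V_R (two copies of V) and edges {u_L, v_R}, {u_R, v_L} for each edge uv of G. If H' is an additive +2c-spanner of G', then the graph H on V whose edges are {u,v} for every edge of H' between a copy of u and a copy of v is an additive +2c-spanner of G with at most as many edges as H'. -/
open scoped ENNReal Classical

/-- The bipartite double cover of `G`: two copies `V × Bool` of the vertex set, with the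
copies `(u, i)` and `(v, j)` adjacent iff `uv` is an edge of `G` and `i ≠ j`. -/
def doubleCover {V : Type*} (G : SimpleGraph V) : SimpleGraph (V × Bool) where
  Adj a b := G.Adj a.1 b.1 ∧ a.2 ≠ b.2
  symm := ⟨fun a b h => ⟨h.1.symm, Ne.symm h.2⟩⟩
  loopless := ⟨fun a h => G.loopless.irrefl a.1 h.1⟩

/-- Projection of a subgraph of the double cover back to `G`: `u ~ v` iff some copy of `u`
is adjacent to some copy of `v`. -/
def projectDown {V : Type*} (G : SimpleGraph V) (H' : SimpleGraph (V × Bool))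
    (hsub : H' ≤ doubleCover G) : SimpleGraph V where
  Adj u v := ∃ i j : Bool, H'.Adj (u, i) (v, j)
  symm := ⟨fun u v ⟨i, j, h⟩ => ⟨j, i, h.symm⟩⟩
  loopless := ⟨fun u ⟨i, j, h⟩ => G.loopless.irrefl u (hsub h).1⟩

/-- Lift a walk in `G` to a walk in the double cover of the same length. -/
lemma doubleCover_lift {V : Type*} {G : SimpleGraph V} {u v : V} (p : G.Walk u v) (i : Bool) :
    ∃ (j : Bool) (q : (doubleCover G).Walk (u, i) (v, j)), q.length = p.length := by
  induction p generalizing i with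
  | nil => exact ⟨i, SimpleGraph.Walk.nil, rfl⟩
  | cons h p ih =>
    obtain ⟨j, q, hq⟩ := ih (!i)
    exact ⟨j, SimpleGraph.Walk.cons ⟨h, by simp⟩ q, by exact congrArg (· + 1) hq⟩

/-- Project a walk in `H'` down to a walk in `projectDown` of the same length. -/
lemma projectDown_walk {V : Type*} {G : SimpleGraph V} {H' : SimpleGraph (V × Bool)}
    (hsub : H' ≤ doubleCover G) {a b : V × Bool} (r : H'.Walk a b) :
    ∃ (p : (projectDown G H' hsub).Walk a.1 b.1), p.length = r.length := by
  induction r with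
  | nil => exact ⟨SimpleGraph.Walk.nil, rfl⟩
  | @cons x y z h r ih =>
    obtain ⟨p, hp⟩ := ih
    exact ⟨SimpleGraph.Walk.cons ⟨x.2, y.2, h⟩ p, by exact congrArg (· + 1) hp⟩

/-- The bipartite double cover construction preserves additive spanners: if `H'` is an
additive `+2c`-spanner of the double cover `G'` of `G`, then the projection `H` of `H'`
down to `V` is an additive `+2c`-spanner of `G` with at most as many edges as `H'`. -/
theorem doubleCover_spanner_projection {V : Type*} [Fintype V]
    (G : SimpleGraph V) (c : ℕ)
    (H' : SimpleGraph (V × Bool)) (hsub : H' ≤ doubleCover G)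
    (hspan : ∀ a b : V × Bool,
      H'.edist a b ≤ (doubleCover G).edist a b + (2 * c : ℕ∞)) :
    (∀ u v : V, (projectDown G H' hsub).edist u v ≤ G.edist u v + (2 * c : ℕ∞)) ∧
    (projectDown G H' hsub).edgeSet.ncard ≤ H'.edgeSet.ncard := by
  constructor
  · intro u v
    rcases eq_or_ne (G.edist u v) ⊤ with htop | hne
    · rw [htop]; simp
    · obtain ⟨p, hp⟩ := SimpleGraph.exists_walk_of_edist_ne_top hne
      obtain ⟨j, q, hq⟩ := doubleCover_lift p false
      have h1 : (doubleCover G).edist (u, false) (v, j) ≤ G.edist u v := by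
        rw [← hp, ← hq]; exact SimpleGraph.edist_le q
      have h2 : H'.edist (u, false) (v, j) ≤ G.edist u v + (2 * c : ℕ∞) :=
        (hspan _ _).trans (add_le_add_left h1 _)
      have hne' : H'.edist (u, false) (v, j) ≠ ⊤ := by
        intro h; rw [h] at h2
        exact (lt_irrefl ⊤ (lt_of_le_of_lt h2 (by
          exact ENat.add_lt_top.mpr ⟨lt_top_iff_ne_top.mpr hne,
            lt_top_iff_ne_top.mpr (ENat.coe_ne_top _)⟩))).elim
      obtain ⟨r, hr⟩ := SimpleGraph.exists_walk_of_edist_ne_top hne'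
      obtain ⟨s, hs⟩ := projectDown_walk hsub r
      calc (projectDown G H' hsub).edist u v ≤ s.length := SimpleGraph.edist_le s
        _ = H'.edist (u, false) (v, j) := by rw [hs, hr]
        _ ≤ G.edist u v + (2 * c : ℕ∞) := h2
  · have hsubset : (projectDown G H' hsub).edgeSet ⊆ Sym2.map Prod.fst '' H'.edgeSet := by
      rintro e he
      induction e with
      | h x y =>
        obtain ⟨i, j, h⟩ := he
        exact ⟨s((x, i), (y, j)), h, rfl⟩
    calc (projectDown G H' hsub).edgeSet.ncard
        ≤ (Sym2.map Prod.fst '' H'.edgeSet).ncard :=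
          Set.ncard_le_ncard hsubset ((Set.toFinite _).image _)
      _ ≤ H'.edgeSet.ncard := Set.ncard_image_le (Set.toFinite _)
end
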